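/- Let a ∈ ℝ ∪ {−∞} and b ∈ ℝ with a < b. Then: (i) for c ∈ ℝ ∪ {−∞} and d ∈ ℝ with c < d, the k-vector space Hom(k_{(a,b]}, k_{(c,d]}) is one-dimensional over k if c ≤ a < d ≤ b, and is zero otherwise; (ii) for real numbers c ≤ d, the k-vector space Hom(k_{(a,b]}, k_{[c,d]}) is one-dimensional over k if a < d ≤ b, and is zero otherwise. -/

import Mathlib

open CategoryTheory TopologicalSpace Set Topology

noncomputable section

variable (k : Type) [Field k]

/-- The support of the function `s : V ∩ I → k` is closed in `V`. -/
def SuppClosedIn (I V : Set ℝ) (s : ↥(V ∩ I) → k) : Prop :=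
  ∀ x ∈ V, x ∈ closure {y : ℝ | ∃ h : y ∈ V ∩ I, s ⟨y, h⟩ ≠ 0} →
    ∃ h : x ∈ V ∩ I, s ⟨x, h⟩ ≠ 0

lemma zero_locConst (I V : Set ℝ) :
    IsLocallyConstant (0 : ↥(V ∩ I) → k) ∧ SuppClosedIn k I V 0 := by
  constructor
  · exact IsLocallyConstant.const 0
  · intro x _ hx
    exfalso
    have h0 : {y : ℝ | ∃ h : y ∈ V ∩ I, (0 : ↥(V ∩ I) → k) ⟨y, h⟩ ≠ 0} = ∅ := by
      ext y; simp
    rw [h0, closure_empty] at hx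
    exact hx

/-- The sections over `V` of the sheaf `k_I`: locally constant functions on `V ∩ I`
whose support is closed in `V`. -/
def secSub (I V : Set ℝ) : Submodule k (↥(V ∩ I) → k) where
  carrier := {s | IsLocallyConstant s ∧ SuppClosedIn k I V s}
  zero_mem' := zero_locConst k I V
  add_mem' := by
    rintro s t ⟨hslc, hscl⟩ ⟨htlc, htcl⟩
    have hlc : IsLocallyConstant (s + t) := hslc.comp₂ htlc (· + ·)
    refine ⟨hlc, ?_⟩
    intro x hxV hxcl
    have hsub : {y : ℝ | ∃ h : y ∈ V ∩ I, (s + t) ⟨y, h⟩ ≠ 0}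
        ⊆ {y : ℝ | ∃ h : y ∈ V ∩ I, s ⟨y, h⟩ ≠ 0}
          ∪ {y : ℝ | ∃ h : y ∈ V ∩ I, t ⟨y, h⟩ ≠ 0} := by
      rintro y ⟨h, hy⟩
      by_cases hsy : s ⟨y, h⟩ = 0
      · refine Or.inr ⟨h, fun h0 => hy ?_⟩
        show s ⟨y, h⟩ + t ⟨y, h⟩ = 0
        rw [hsy, h0, add_zero]
      · exact Or.inl ⟨h, hsy⟩
    have hxVI : x ∈ V ∩ I := by
      have hcl2 := closure_mono hsub hxcl
      rw [closure_union] at hcl2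
      rcases hcl2 with h | h
      · exact (hscl x hxV h).choose
      · exact (htcl x hxV h).choose
    refine ⟨hxVI, ?_⟩
    have hA : IsClosed {y : ↥(V ∩ I) | (s + t) y ≠ 0} := by
      have h1 : IsOpen ((s + t) ⁻¹' {0}) := hlc {0}
      have h2 := h1.isClosed_compl
      have h3 : ((s + t) ⁻¹' {0})ᶜ = {y : ↥(V ∩ I) | (s + t) y ≠ 0} := by
        ext y; simp
      exact h3 ▸ h2
    have hmem : (⟨x, hxVI⟩ : ↥(V ∩ I)) ∈ closure {y : ↥(V ∩ I) | (s + t) y ≠ 0} := by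
      rw [closure_subtype]
      have himg : Subtype.val '' {y : ↥(V ∩ I) | (s + t) y ≠ 0}
          = {y : ℝ | ∃ h : y ∈ V ∩ I, (s + t) ⟨y, h⟩ ≠ 0} := by
        ext y
        constructor
        · rintro ⟨z, hz, rfl⟩; exact ⟨z.2, hz⟩
        · rintro ⟨h, hy⟩; exact ⟨⟨y, h⟩, hy, rfl⟩
      rw [himg]
      exact hxcl
    have := hA.closure_eq ▸ hmem
    exact this
  smul_mem' := by
    intro c s hs
    rcases hs with ⟨hlc, hcl⟩
    by_cases hc : c = 0
    · subst hc
      rw [zero_smul]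
      exact zero_locConst k I V
    · constructor
      · exact hlc.comp (fun a => c • a)
      · intro x hxV hxcl
        have hset : {y : ℝ | ∃ h : y ∈ V ∩ I, (c • s) ⟨y, h⟩ ≠ 0}
            = {y : ℝ | ∃ h : y ∈ V ∩ I, s ⟨y, h⟩ ≠ 0} := by
          ext y
          constructor
          · rintro ⟨h, hy⟩
            refine ⟨h, fun h0 => hy ?_⟩
            show c • s ⟨y, h⟩ = 0
            rw [h0, smul_zero]
          · rintro ⟨h, hy⟩
            exact ⟨h, by simpa [smul_eq_zero, hc] using hy⟩
        rw [hset] at hxcl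
        obtain ⟨h, hy⟩ := hcl x hxV hxcl
        exact ⟨h, by simpa [smul_eq_zero, hc] using hy⟩
/-- Restriction of sections. -/
def resFun (I : Set ℝ) {V W : Set ℝ} (h : W ⊆ V) (s : ↥(V ∩ I) → k) : ↥(W ∩ I) → k :=
  fun y => s ⟨y.1, ⟨h y.2.1, y.2.2⟩⟩

lemma resFun_mem (I : Set ℝ) {V W : Set ℝ} (h : W ⊆ V) (s : ↥(V ∩ I) → k)
    (hs : s ∈ secSub k I V) : resFun k I h s ∈ secSub k I W := by
  obtain ⟨hlc, hcl⟩ := hs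
  constructor
  · exact hlc.comp_continuous (Continuous.subtype_mk continuous_subtype_val _)
  · intro x hxW hxcl
    have hsub : {y : ℝ | ∃ h' : y ∈ W ∩ I, resFun k I h s ⟨y, h'⟩ ≠ 0}
        ⊆ {y : ℝ | ∃ h' : y ∈ V ∩ I, s ⟨y, h'⟩ ≠ 0} := by
      rintro y ⟨h', hy⟩
      exact ⟨⟨h h'.1, h'.2⟩, hy⟩
    obtain ⟨hxVI, hne⟩ := hcl x (h hxW) (closure_mono hsub hxcl)
    exact ⟨⟨hxW, hxVI.2⟩, hne⟩

/-- Restriction as a linear map. -/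
def resLM (I : Set ℝ) {V W : Set ℝ} (h : W ⊆ V) : secSub k I V →ₗ[k] secSub k I W where
  toFun s := ⟨resFun k I h s.1, resFun_mem k I h s.1 s.2⟩
  map_add' s t := rfl
  map_smul' c s := rfl

/-- The presheaf `k_I` on `ℝ`. -/
def intervalPresheaf (I : Set ℝ) : TopCat.Presheaf (ModuleCat.{0} k) (TopCat.of ℝ) where
  obj V := ModuleCat.of k (secSub k I V.unop.1)
  map {V W} f := ModuleCat.ofHom (resLM k I (leOfHom f.unop))
  map_id V := rfl
  map_comp f g := rfl
theorem intervalPresheaf_isSheaf (I : Set ℝ) : (intervalPresheaf k I).IsSheaf := by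
  classical
  rw [TopCat.Presheaf.isSheaf_iff_isSheafUniqueGluing]
  intro ι U sf hcomp
  -- pointwise compatibility
  have key : ∀ (i j : ι) (x : ℝ) (hxi : x ∈ (U i).1 ∩ I) (hxj : x ∈ (U j).1 ∩ I),
      (sf i : secSub k I (U i).1).1 ⟨x, hxi⟩ = (sf j : secSub k I (U j).1).1 ⟨x, hxj⟩ := by
    intro i j x hxi hxj
    have h := hcomp i j
    have hmem : x ∈ (U i ⊓ U j).1 ∩ I := ⟨⟨hxi.1, hxj.1⟩, hxi.2⟩
    have h2 := congrFun (congrArg Subtype.val h) ⟨x, hmem⟩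
    exact h2
  have hmemS : ∀ x : ↥((iSup U : Opens (TopCat.of ℝ)).1 ∩ I), ∃ i, x.1 ∈ U i := by
    intro x
    exact Opens.mem_iSup.mp x.2.1
  set idx : ↥((iSup U : Opens (TopCat.of ℝ)).1 ∩ I) → ι := fun x => (hmemS x).choose with hidxdef
  have hidx : ∀ x, x.1 ∈ U (idx x) := fun x => (hmemS x).choose_spec
  set s₀ : ↥((iSup U : Opens (TopCat.of ℝ)).1 ∩ I) → k :=
    fun x => (sf (idx x)).1 ⟨x.1, ⟨hidx x, x.2.2⟩⟩ with hs₀def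
  have hs₀ : ∀ (x : ↥((iSup U : Opens (TopCat.of ℝ)).1 ∩ I)) (i : ι) (hx : x.1 ∈ U i),
      s₀ x = (sf i : secSub k I (U i).1).1 ⟨x.1, ⟨hx, x.2.2⟩⟩ :=
    fun x i hx => key (idx x) i x.1 ⟨hidx x, x.2.2⟩ ⟨hx, x.2.2⟩
  have hlc : IsLocallyConstant s₀ := by
    rw [IsLocallyConstant.iff_exists_open]
    intro x
    obtain ⟨i, hi⟩ := hmemS x
    have hlci : IsLocallyConstant ((sf i : secSub k I (U i).1).1 : ↥((U i).1 ∩ I) → k) := (sf i : secSub k I (U i).1).2.1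
    obtain ⟨W, hWopen, hpW, hWconst⟩ := hlci.exists_open (⟨x.1, ⟨hi, x.2.2⟩⟩ : ↥((U i).1 ∩ I))
    obtain ⟨O, hOopen, hWO⟩ := isOpen_induced_iff.mp hWopen
    subst hWO
    refine ⟨Subtype.val ⁻¹' (O ∩ (U i).1), (hOopen.inter (U i).2).preimage continuous_subtype_val,
      ⟨hpW, hi⟩, ?_⟩
    intro y hy
    have hyi : y.1 ∈ U i := hy.2
    rw [hs₀ y i hyi, hs₀ x i hi]
    exact hWconst ⟨y.1, ⟨hyi, y.2.2⟩⟩ hy.1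
  have hscl : SuppClosedIn k I (iSup U : Opens (TopCat.of ℝ)).1 s₀ := by
    intro x hxS hxcl
    obtain ⟨i, hi⟩ := Opens.mem_iSup.mp hxS
    have h1 : x ∈ closure ({y : ℝ | ∃ h : y ∈ (iSup U : Opens (TopCat.of ℝ)).1 ∩ I, s₀ ⟨y, h⟩ ≠ 0}
        ∩ (U i).1) := by
      rw [mem_closure_iff] at hxcl ⊢
      intro O hO hxO
      obtain ⟨z, hz⟩ := hxcl (O ∩ (U i).1) (hO.inter (U i).2) ⟨hxO, hi⟩
      exact ⟨z, hz.1.1, hz.2, hz.1.2⟩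
    have hsub : {y : ℝ | ∃ h : y ∈ (iSup U : Opens (TopCat.of ℝ)).1 ∩ I, s₀ ⟨y, h⟩ ≠ 0}
        ∩ (U i).1 ⊆ {y : ℝ | ∃ h : y ∈ (U i).1 ∩ I, (sf i : secSub k I (U i).1).1 ⟨y, h⟩ ≠ 0} := by
      rintro y ⟨⟨hy, hne⟩, hyi⟩
      refine ⟨⟨hyi, hy.2⟩, ?_⟩
      rw [← hs₀ ⟨y, hy⟩ i hyi]
      exact hne
    obtain ⟨hyUI, hne⟩ := (sf i : secSub k I (U i).1).2.2 x hi (closure_mono hsub h1)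
    refine ⟨⟨hxS, hyUI.2⟩, ?_⟩
    rw [hs₀ ⟨x, ⟨hxS, hyUI.2⟩⟩ i hyUI.1]
    exact hne
  refine ⟨(⟨s₀, hlc, hscl⟩ : secSub k I (iSup U : Opens (TopCat.of ℝ)).1), ?_, ?_⟩
  · intro i
    apply Subtype.ext
    funext y
    exact hs₀ ⟨y.1, ⟨leOfHom (Opens.leSupr U i) y.2.1, y.2.2⟩⟩ i y.2.1
  · intro t ht
    apply Subtype.ext
    funext x
    have h := ht (idx x)
    have h2 := congrFun (congrArg Subtype.val h) ⟨x.1, ⟨hidx x, x.2.2⟩⟩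
    exact h2

/-- The sheaf `k_I` on `ℝ` for an interval `I`: locally constant functions on `V ∩ I`
whose support is closed in `V`. -/
def intervalSheaf (I : Set ℝ) :
    Sheaf (Opens.grothendieckTopology (TopCat.of ℝ)) (ModuleCat.{0} k) :=
  ⟨intervalPresheaf k I, intervalPresheaf_isSheaf k I⟩
/-- The category of sheaves of `k`-vector spaces on `ℝ`. -/
abbrev RealSheafCat := Sheaf (Opens.grothendieckTopology (TopCat.of ℝ)) (ModuleCat.{0} k)

instance sheafHomSMul (F G : RealSheafCat k) : SMul k (F ⟶ G) :=
  ⟨fun c f => ⟨c • f.hom⟩⟩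

instance sheafHomModule (F G : RealSheafCat k) : Module k (F ⟶ G) :=
  Function.Injective.module k
    { toFun := fun f : F ⟶ G => f.hom
      map_zero' := rfl
      map_add' := fun _ _ => rfl }
    (fun _ _ h => Sheaf.hom_ext h) (fun _ _ => rfl)

instance : HasExt.{1} (RealSheafCat k) := by
  letI := HasDerivedCategory.standard (RealSheafCat k)
  exact hasExt_of_hasDerivedCategory _

/-- The interval `(a, b)` with possibly infinite endpoints. -/
def Ioo' (a b : EReal) : Set ℝ := {x : ℝ | a < (x : EReal) ∧ (x : EReal) < b}

/-- The interval `[a, b)` with a possibly infinite right endpoint. -/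
def Ico' (a : ℝ) (b : EReal) : Set ℝ := {x : ℝ | a ≤ x ∧ (x : EReal) < b}

/-- The interval `(a, b]` with a possibly infinite left endpoint. -/
def Ioc' (a : EReal) (b : ℝ) : Set ℝ := {x : ℝ | a < (x : EReal) ∧ x ≤ b}

/-- Identification of sheaves on the topological space `ℝ` with objects of `RealSheafCat`. -/
def toRS (F : TopCat.Sheaf (ModuleCat.{0} k) (TopCat.of ℝ)) : RealSheafCat k := F


open CategoryTheory TopologicalSpace Set Topology Opposite
section
variable (k : Type) [Field k]

/-- Helper to build opens of `TopCat.of ℝ` from open sets of `ℝ`. -/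
def mkOpens (s : Set ℝ) (h : IsOpen s) : Opens (TopCat.of ℝ) := ⟨s, h⟩

lemma phi_nat {I J : Set ℝ} (φ : intervalSheaf k I ⟶ intervalSheaf k J)
    {V W : Opens (TopCat.of ℝ)} (h : W ≤ V) (s : (secSub k I V.1)) (y : ℝ) (hy : y ∈ W.1 ∩ J) :
    ((φ.hom.app (op V) s).1 ⟨y, ⟨h hy.1, hy.2⟩⟩ : k)
      = (φ.hom.app (op W) ⟨resFun k I h s.1, resFun_mem k I h s.1 s.2⟩).1 ⟨y, hy⟩ :=
  (congrFun (congrArg Subtype.val (ConcreteCategory.congr_hom (φ.hom.naturality (homOfLE h).op) s)) ⟨y, hy⟩).symm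

lemma oneSec_mem (a : EReal) (b : ℝ) (N : Set ℝ) (hN : ∀ x ∈ N, a < (x : EReal)) :
    (fun _ => 1 : ↥(N ∩ Ioc' a b) → k) ∈ secSub k (Ioc' a b) N := by
  refine ⟨IsLocallyConstant.const 1, ?_⟩
  intro x hxN hxcl
  have hsub : {y : ℝ | ∃ h : y ∈ N ∩ Ioc' a b, (fun _ => (1:k)) (⟨y, h⟩ : ↥(N ∩ Ioc' a b)) ≠ 0}
      ⊆ Iic b := fun y hy => hy.choose.2.2
  have hxb : x ≤ b := by
    have := closure_mono hsub hxcl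
    rwa [closure_Iic] at this
  exact ⟨⟨hxN, hN x hxN, hxb⟩, one_ne_zero⟩

/-- The constant section 1 of `k_{(a,b]}` over an open set avoiding `a`. -/
def oneSec (a : EReal) (b : ℝ) (N : Set ℝ) (hN : ∀ x ∈ N, a < (x : EReal)) :
    secSub k (Ioc' a b) N := ⟨fun _ => 1, oneSec_mem k a b N hN⟩

end
section
open CategoryTheory TopologicalSpace Set Topology Opposite
variable (k : Type) [Field k]

/-- Master vanishing lemma. -/
lemma vanish (a : EReal) (b : ℝ) (J : Set ℝ)
    (φ : intervalSheaf k (Ioc' a b) ⟶ intervalSheaf k J)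
    (H : ∀ y : ℝ, ∀ hyI : y ∈ Ioc' a b, ∀ hyJ : y ∈ J,
      ∃ (N : Opens (TopCat.of ℝ)) (hyN : y ∈ N.1) (hN : ∀ x : ℝ, x ∈ N.1 → a < (x : EReal)),
        (φ.hom.app (op N) (oneSec k a b N.1 hN)).1 ⟨y, ⟨hyN, hyJ⟩⟩ = 0) :
    φ = 0 := by
  apply Sheaf.hom_ext
  apply NatTrans.ext
  funext Vop
  apply ModuleCat.hom_ext
  apply LinearMap.ext
  intro s
  apply Subtype.ext
  funext y
  show ((φ.hom.app Vop s).1 y : k) = 0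
  obtain ⟨W, rfl⟩ : ∃ W, Vop = op W := ⟨Vop.unop, rfl⟩
  set S := {z : ℝ | ∃ h : z ∈ W.1 ∩ Ioc' a b, s.1 ⟨z, h⟩ ≠ 0} with hS
  by_cases hy : y.1 ∈ closure S
  · -- y in closure of support: y ∈ I, use H
    obtain ⟨hyWI, _⟩ := s.2.2 y.1 y.2.1 hy
    have hyI : y.1 ∈ Ioc' a b := hyWI.2
    have hyJ : y.1 ∈ J := y.2.2
    obtain ⟨N, hyN, hN, hval⟩ := H y.1 hyI hyJ
    -- local constancy of s near y
    obtain ⟨U, hUopen, hyU, hconst⟩ := s.2.1.exists_open (⟨y.1, hyWI⟩ : ↥(W.1 ∩ Ioc' a b))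
    obtain ⟨O, hOopen, rfl⟩ := isOpen_induced_iff.mp hUopen
    obtain ⟨u, hau, huy⟩ := EReal.exists_between_coe_real hyI.1
    set M : Opens (TopCat.of ℝ) :=
      ⟨(W.1 ∩ N.1 ∩ O ∩ Ioi u : Set ℝ), ((W.2.inter N.2).inter hOopen).inter (isOpen_Ioi : IsOpen (Ioi u))⟩ with hM
    have hMW : M ≤ W := fun x hx => hx.1.1.1
    have hMN : M ≤ N := fun x hx => hx.1.1.2
    have hyM : y.1 ∈ M.1 := ⟨⟨⟨y.2.1, hyN⟩, hyU⟩, EReal.coe_lt_coe_iff.mp huy⟩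
    have hMa : ∀ x : ℝ, x ∈ M.1 → a < (x : EReal) := fun x hx =>
      lt_trans hau (EReal.coe_lt_coe_iff.mpr hx.2)
    -- restriction of s to M is a scalar multiple of the one section
    have key : (⟨resFun k (Ioc' a b) hMW s.1, resFun_mem k (Ioc' a b) hMW s.1 s.2⟩ :
        secSub k (Ioc' a b) M.1) = s.1 ⟨y.1, hyWI⟩ • oneSec k a b M.1 hMa := by
      apply Subtype.ext
      funext z
      show s.1 ⟨z.1, ⟨hMW z.2.1, z.2.2⟩⟩ = s.1 ⟨y.1, hyWI⟩ • (1 : k)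
      rw [smul_eq_mul, mul_one]
      rw [hconst ⟨z.1, ⟨hMW z.2.1, z.2.2⟩⟩ z.2.1.1.2]
    have h1 := phi_nat k φ hMW s y.1 ⟨hyM, hyJ⟩
    rw [key] at h1
    erw [map_smul] at h1
    have h2 : ((s.1 ⟨y.1, hyWI⟩ • (φ.hom.app (op M) (oneSec k a b M.1 hMa))).1
        ⟨y.1, ⟨hyM, hyJ⟩⟩ : k)
        = s.1 ⟨y.1, hyWI⟩ • ((φ.hom.app (op M) (oneSec k a b M.1 hMa)).1 ⟨y.1, ⟨hyM, hyJ⟩⟩) := rfl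
    -- relate the M-value of oneSec to the N-value
    have h3 := phi_nat k φ hMN (oneSec k a b N.1 hN) y.1 ⟨hyM, hyJ⟩
    have h4 : (⟨resFun k (Ioc' a b) hMN (oneSec k a b N.1 hN).1,
        resFun_mem k (Ioc' a b) hMN (oneSec k a b N.1 hN).1 (oneSec k a b N.1 hN).2⟩ :
        secSub k (Ioc' a b) M.1) = oneSec k a b M.1 hMa := Subtype.ext rfl
    rw [h4] at h3
    have hyval : ((φ.hom.app (op W) s).1 y : k) = (φ.hom.app (op W) s).1 ⟨y.1, ⟨y.2.1, hyJ⟩⟩ := rfl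
    rw [hyval, h1, h2, ← h3, hval, smul_zero]
  · -- y outside closure of support
    set M : Opens (TopCat.of ℝ) :=
      ⟨(W.1 ∩ (closure S)ᶜ : Set ℝ), W.2.inter isClosed_closure.isOpen_compl⟩ with hM
    have hMW : M ≤ W := fun x hx => hx.1
    have hyM : y.1 ∈ M.1 := ⟨y.2.1, hy⟩
    have hres : (⟨resFun k (Ioc' a b) hMW s.1, resFun_mem k (Ioc' a b) hMW s.1 s.2⟩ :
        secSub k (Ioc' a b) M.1) = 0 := by
      apply Subtype.ext
      funext z
      show s.1 ⟨z.1, ⟨hMW z.2.1, z.2.2⟩⟩ = 0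
      by_contra hzne
      exact z.2.1.2 (subset_closure ⟨⟨hMW z.2.1, z.2.2⟩, hzne⟩)
    have h1 := phi_nat k φ hMW s y.1 ⟨hyM, y.2.2⟩
    rw [hres] at h1
    erw [map_zero] at h1
    have hyval : ((φ.hom.app (op W) s).1 y : k)
        = (φ.hom.app (op W) s).1 ⟨y.1, ⟨y.2.1, y.2.2⟩⟩ := rfl
    rw [hyval, h1]
    rfl
end
section
open CategoryTheory TopologicalSpace Set Topology Opposite
variable (k : Type) [Field k]

/-- The image of the one-section vanishes at points of subopens missing `(a,b]`. -/
lemma g_zero_on (a : EReal) (b : ℝ) (J : Set ℝ)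
    (φ : intervalSheaf k (Ioc' a b) ⟶ intervalSheaf k J)
    (N : Opens (TopCat.of ℝ)) (hN : ∀ x : ℝ, x ∈ N.1 → a < (x : EReal))
    (N' : Opens (TopCat.of ℝ)) (hsub : N' ≤ N) (hfree : N'.1 ∩ Ioc' a b = ∅)
    (z : ℝ) (hz : z ∈ N'.1 ∩ J) :
    (φ.hom.app (op N) (oneSec k a b N.1 hN)).1 ⟨z, ⟨hsub hz.1, hz.2⟩⟩ = 0 := by
  have h1 := phi_nat k φ hsub (oneSec k a b N.1 hN) z hz
  have h2 : (⟨resFun k (Ioc' a b) hsub (oneSec k a b N.1 hN).1,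
      resFun_mem k (Ioc' a b) hsub (oneSec k a b N.1 hN).1 (oneSec k a b N.1 hN).2⟩ :
      secSub k (Ioc' a b) N'.1) = 0 := by
    apply Subtype.ext
    funext w
    exact absurd (hfree ▸ w.2 : w.1 ∈ (∅ : Set ℝ)) (notMem_empty _)
  rw [h2] at h1
  rw [h1]
  erw [map_zero]
  rfl

/-- The image of the one-section is constant on preconnected `N ∩ J`. -/
lemma g_const (a : EReal) (b : ℝ) (J : Set ℝ)
    (φ : intervalSheaf k (Ioc' a b) ⟶ intervalSheaf k J)
    (N : Opens (TopCat.of ℝ)) (hN : ∀ x : ℝ, x ∈ N.1 → a < (x : EReal))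
    (hpre : IsPreconnected (N.1 ∩ J)) (z z' : ↥(N.1 ∩ J)) :
    (φ.hom.app (op N) (oneSec k a b N.1 hN)).1 z
      = (φ.hom.app (op N) (oneSec k a b N.1 hN)).1 z' := by
  haveI := Subtype.preconnectedSpace hpre
  exact (φ.hom.app (op N) (oneSec k a b N.1 hN)).2.1.apply_eq_of_preconnectedSpace z z'
end
section
open CategoryTheory TopologicalSpace Set Topology Opposite
variable (k : Type) [Field k]

lemma zero_case_right (a : EReal) (b : ℝ) (J : Set ℝ)
    (φ : intervalSheaf k (Ioc' a b) ⟶ intervalSheaf k J)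
    (hbd : ∃ d' : ℝ, b < d' ∧ ∀ z : ℝ, b < z → z ≤ d' → z ∈ J)
    (hJconn : ∀ u v : ℝ, OrdConnected (Ioo u v ∩ J))
    (y : ℝ) (hyI : y ∈ Ioc' a b) (hyJ : y ∈ J) :
    ∃ (N : Opens (TopCat.of ℝ)) (hyN : y ∈ N.1) (hN : ∀ x : ℝ, x ∈ N.1 → a < (x : EReal)),
      (φ.hom.app (op N) (oneSec k a b N.1 hN)).1 ⟨y, ⟨hyN, hyJ⟩⟩ = 0 := by
  obtain ⟨d', hbd', hJ'⟩ := hbd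
  obtain ⟨u, hau, huy⟩ := EReal.exists_between_coe_real hyI.1
  have huy' : u < y := EReal.coe_lt_coe_iff.mp huy
  set v : ℝ := (b + d') / 2 with hv
  have hbv : b < v := by simp only [hv]; linarith
  have hvd : v ≤ d' := by simp only [hv]; linarith
  set N : Opens (TopCat.of ℝ) := mkOpens (Ioo u v) isOpen_Ioo with hN
  have hyN : y ∈ N.1 := ⟨huy', lt_of_le_of_lt hyI.2 hbv⟩
  have hNa : ∀ x : ℝ, x ∈ N.1 → a < (x : EReal) := fun x hx =>
    lt_trans hau (EReal.coe_lt_coe_iff.mpr hx.1)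
  refine ⟨N, hyN, hNa, ?_⟩
  set z : ℝ := (b + v) / 2 with hz
  have hbz : b < z := by simp only [hz]; linarith
  have hzv : z < v := by simp only [hz]; linarith
  have hzJ : z ∈ J := hJ' z hbz (le_trans (le_of_lt hzv) hvd)
  set N' : Opens (TopCat.of ℝ) := mkOpens (Ioo b v) isOpen_Ioo with hN'
  have hsub : N' ≤ N := fun x hx => ⟨lt_trans (lt_of_lt_of_le huy' hyI.2) hx.1, hx.2⟩
  have hfree : N'.1 ∩ Ioc' a b = ∅ := by
    ext x
    simp only [mem_inter_iff, mem_empty_iff_false, iff_false]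
    rintro ⟨hx1, hx2⟩
    exact absurd hx2.2 (not_le.mpr hx1.1)
  have hzN' : z ∈ N'.1 ∩ J := ⟨⟨hbz, hzv⟩, hzJ⟩
  have hpre : IsPreconnected (Ioo u v ∩ J) :=
    isPreconnected_iff_ordConnected.mpr (hJconn u v)
  have h1 := g_const k a b J φ N hNa hpre ⟨y, ⟨hyN, hyJ⟩⟩ ⟨z, ⟨hsub hzN'.1, hzN'.2⟩⟩
  rw [h1]
  exact g_zero_on k a b J φ N hNa N' hsub hfree z hzN'
end
section
open CategoryTheory TopologicalSpace Set Topology Opposite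
variable (k : Type) [Field k]

lemma zero_case_left (a : EReal) (b : ℝ) (c : EReal) (d : ℝ)
    (hcd : c < (d : EReal)) (hac : a < c) (hdb : d ≤ b)
    (φ : intervalSheaf k (Ioc' a b) ⟶ intervalSheaf k (Ioc' c d))
    (y : ℝ) (hyI : y ∈ Ioc' a b) (hyJ : y ∈ Ioc' c d) :
    ∃ (N : Opens (TopCat.of ℝ)) (hyN : y ∈ N.1) (hN : ∀ x : ℝ, x ∈ N.1 → a < (x : EReal)),
      (φ.hom.app (op N) (oneSec k a b N.1 hN)).1 ⟨y, ⟨hyN, hyJ⟩⟩ = 0 := by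
  have hctop : c ≠ ⊤ := ne_top_of_lt hcd
  have hcbot : c ≠ ⊥ := ne_bot_of_gt hac
  set c' : ℝ := c.toReal with hc'def
  have hc' : (c' : EReal) = c := EReal.coe_toReal hctop hcbot
  have hc'd : c' < d := EReal.coe_lt_coe_iff.mp (hc' ▸ hcd)
  obtain ⟨u, hau, huc⟩ := EReal.exists_between_coe_real hac
  have huc' : u < c' := EReal.coe_lt_coe_iff.mp (hc' ▸ huc)
  set N : Opens (TopCat.of ℝ) := mkOpens (Ioo u (b+1)) isOpen_Ioo with hNdef
  have hc'y : c' < y := EReal.coe_lt_coe_iff.mp (hc' ▸ hyJ.1)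
  have hyN : y ∈ N.1 := ⟨lt_trans huc' hc'y, by linarith [hyI.2]⟩
  have hNa : ∀ x : ℝ, x ∈ N.1 → a < (x : EReal) := fun x hx =>
    lt_trans hau (EReal.coe_lt_coe_iff.mpr hx.1)
  refine ⟨N, hyN, hNa, ?_⟩
  by_contra hne
  set g := φ.hom.app (op N) (oneSec k a b N.1 hNa) with hgdef
  -- N ∩ (c,d] = Ioc c' d
  have hNJ : ∀ x : ℝ, x ∈ Ioc c' d → x ∈ N.1 ∩ Ioc' c d := by
    intro x hx
    refine ⟨⟨lt_trans huc' hx.1, by linarith [hx.2]⟩, ?_, hx.2⟩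
    rw [← hc']
    exact EReal.coe_lt_coe_iff.mpr hx.1
  have hpre : IsPreconnected (Ioo u (b+1) ∩ Ioc' c d) := by
    have : Ioo u (b+1) ∩ Ioc' c d = Ioc c' d := by
      ext x
      constructor
      · rintro ⟨_, hx2⟩
        exact ⟨EReal.coe_lt_coe_iff.mp (hc' ▸ hx2.1), hx2.2⟩
      · exact hNJ x
    rw [this]
    exact isPreconnected_Ioc
  have hgne : ∀ z : ↥(N.1 ∩ Ioc' c d), g.1 z ≠ 0 := by
    intro z h0
    exact hne ((g_const k a b (Ioc' c d) φ N hNa hpre ⟨y, ⟨hyN, hyJ⟩⟩ z).trans h0)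
  -- c' is in the closure of the support of g
  have hsupp : Ioc c' d ⊆ {z : ℝ | ∃ h : z ∈ N.1 ∩ Ioc' c d, g.1 ⟨z, h⟩ ≠ 0} := by
    intro x hx
    exact ⟨hNJ x hx, hgne ⟨x, hNJ x hx⟩⟩
  have hcmem : c' ∈ closure {z : ℝ | ∃ h : z ∈ N.1 ∩ Ioc' c d, g.1 ⟨z, h⟩ ≠ 0} := by
    have h1 : c' ∈ closure (Ioc c' d) := by
      rw [closure_Ioc (ne_of_lt hc'd)]
      exact ⟨le_refl c', le_of_lt hc'd⟩
    exact closure_mono hsupp h1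
  have hcN : c' ∈ N.1 := ⟨huc', by linarith⟩
  obtain ⟨hcNJ, _⟩ := g.2.2 c' hcN hcmem
  have : c < (c' : EReal) := hcNJ.2.1
  rw [hc'] at this
  exact lt_irrefl c this
end
section
open CategoryTheory TopologicalSpace Set Topology Opposite
variable (k : Type) [Field k]

attribute [local instance] Classical.propDecidable

/-- The canonical map on sections. -/
def canonFun (a : EReal) (b : ℝ) (J W : Set ℝ) (s : ↥(W ∩ Ioc' a b) → k) : ↥(W ∩ J) → k :=
  fun y => if h : y.1 ∈ Ioc' a b then s ⟨y.1, ⟨y.2.1, h⟩⟩ else 0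

lemma canonFun_mem (a : EReal) (b : ℝ) (J : Set ℝ) (hJb : ∀ z ∈ J, z ≤ b)
    (hcl : ∀ x : ℝ, x ∈ closure (Ioc' a b ∩ J) → x ∈ Ioc' a b → x ∈ J)
    (W : Set ℝ) (s : ↥(W ∩ Ioc' a b) → k) (hs : s ∈ secSub k (Ioc' a b) W) :
    canonFun k a b J W s ∈ secSub k J W := by
  set S := {z : ℝ | ∃ h : z ∈ W ∩ Ioc' a b, s ⟨z, h⟩ ≠ 0} with hSdef
  constructor
  · rw [IsLocallyConstant.iff_exists_open]
    intro y
    by_cases hyI : y.1 ∈ Ioc' a b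
    · obtain ⟨U, hUopen, hyU, hconst⟩ := hs.1.exists_open ⟨y.1, ⟨y.2.1, hyI⟩⟩
      obtain ⟨O, hOopen, rfl⟩ := isOpen_induced_iff.mp hUopen
      obtain ⟨u, hau, huy⟩ := EReal.exists_between_coe_real hyI.1
      refine ⟨Subtype.val ⁻¹' (O ∩ Ioi u),
        (hOopen.inter isOpen_Ioi).preimage continuous_subtype_val,
        ⟨hyU, EReal.coe_lt_coe_iff.mp huy⟩, ?_⟩
      intro z hz
      have hzI : z.1 ∈ Ioc' a b :=
        ⟨lt_trans hau (EReal.coe_lt_coe_iff.mpr hz.2), hJb z.1 z.2.2⟩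
      simp only [canonFun]
      rw [dif_pos hzI, dif_pos hyI]
      rw [hconst ⟨z.1, ⟨z.2.1, hzI⟩⟩ hz.1, hconst ⟨y.1, ⟨y.2.1, hyI⟩⟩ hyU]
    · refine ⟨Subtype.val ⁻¹' (closure S)ᶜ,
        isClosed_closure.isOpen_compl.preimage continuous_subtype_val, ?_, ?_⟩
      · by_contra h
        exact hyI (hs.2 y.1 y.2.1 (not_not.mp h)).choose.2
      · intro z hz
        simp only [canonFun]
        rw [dif_neg hyI]
        by_cases hzI : z.1 ∈ Ioc' a b
        · rw [dif_pos hzI]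
          by_contra hne
          exact hz (subset_closure ⟨⟨z.2.1, hzI⟩, hne⟩)
        · rw [dif_neg hzI]
  · intro x hxW hxcl
    have hT : ∀ z : ℝ, (∃ h : z ∈ W ∩ J, canonFun k a b J W s ⟨z, h⟩ ≠ 0) →
        z ∈ S ∧ z ∈ Ioc' a b ∩ J := by
      rintro z ⟨hz, hne⟩
      by_cases hzI : z ∈ Ioc' a b
      · simp only [canonFun] at hne
        rw [dif_pos hzI] at hne
        exact ⟨⟨⟨hz.1, hzI⟩, hne⟩, ⟨hzI, hz.2⟩⟩
      · exfalso
        apply hne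
        simp only [canonFun]
        rw [dif_neg hzI]
    have hsub1 : {z : ℝ | ∃ h : z ∈ W ∩ J, canonFun k a b J W s ⟨z, h⟩ ≠ 0} ⊆ S :=
      fun z hz => (hT z hz).1
    have hsub2 : {z : ℝ | ∃ h : z ∈ W ∩ J, canonFun k a b J W s ⟨z, h⟩ ≠ 0}
        ⊆ Ioc' a b ∩ J := fun z hz => (hT z hz).2
    obtain ⟨hxWI, hsx⟩ := hs.2 x hxW (closure_mono hsub1 hxcl)
    have hxJ := hcl x (closure_mono hsub2 hxcl) hxWI.2
    refine ⟨⟨hxW, hxJ⟩, ?_⟩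
    simp only [canonFun]
    rw [dif_pos hxWI.2]
    exact hsx

/-- The canonical morphism `k_{(a,b]} ⟶ k_J`. -/
def canonHom (a : EReal) (b : ℝ) (J : Set ℝ) (hJb : ∀ z ∈ J, z ≤ b)
    (hcl : ∀ x : ℝ, x ∈ closure (Ioc' a b ∩ J) → x ∈ Ioc' a b → x ∈ J) :
    intervalSheaf k (Ioc' a b) ⟶ intervalSheaf k J :=
  ⟨{ app := fun W => ModuleCat.ofHom
      { toFun := fun s => ⟨canonFun k a b J W.unop.1 s.1,
          canonFun_mem k a b J hJb hcl W.unop.1 s.1 s.2⟩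
        map_add' := by
          intro s t
          apply Subtype.ext
          funext y
          by_cases h : y.1 ∈ Ioc' a b <;> simp [canonFun, h]
        map_smul' := by
          intro c s
          apply Subtype.ext
          funext y
          by_cases h : y.1 ∈ Ioc' a b <;> simp [canonFun, h] }
     naturality := fun V W f => rfl }⟩

/-- The canonical large open set `(a, b+1)`. -/
def bigV (a : EReal) (b : ℝ) : Opens (TopCat.of ℝ) :=
  mkOpens ({x : ℝ | a < (x : EReal)} ∩ Iio (b + 1))
    ((IsOpen.preimage continuous_coe_real_ereal isOpen_Ioi).inter isOpen_Iio)

lemma bigV_mem (a : EReal) (b : ℝ) : ∀ x : ℝ, x ∈ (bigV a b).1 → a < (x : EReal) :=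
  fun _ hx => hx.1

/-- Evaluation of a morphism at the point `d`. -/
def evMap (a : EReal) (b d : ℝ) (J : Set ℝ) (hd : d ∈ (bigV a b).1 ∩ J) :
    (intervalSheaf k (Ioc' a b) ⟶ intervalSheaf k J) →ₗ[k] k where
  toFun φ := (φ.hom.app (op (bigV a b)) (oneSec k a b (bigV a b).1 (bigV_mem a b))).1 ⟨d, hd⟩
  map_add' φ ψ := rfl
  map_smul' c φ := rfl

lemma rank_one (a : EReal) (b : ℝ) (J : Set ℝ) (d : ℝ)
    (had : a < (d : EReal)) (hdb : d ≤ b) (hJd : d ∈ J) (hJd' : ∀ z ∈ J, z ≤ d)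
    (hcl : ∀ x : ℝ, x ∈ closure (Ioc' a b ∩ J) → x ∈ Ioc' a b → x ∈ J)
    (hpre : IsPreconnected ({x : ℝ | a < (x : EReal)} ∩ Iio (b + 1) ∩ J)) :
    Module.rank k (intervalSheaf k (Ioc' a b) ⟶ intervalSheaf k J) = 1 := by
  have hJb : ∀ z ∈ J, z ≤ b := fun z hz => le_trans (hJd' z hz) hdb
  have hdV : d ∈ (bigV a b).1 ∩ J := ⟨⟨had, lt_of_le_of_lt hdb (lt_add_one b)⟩, hJd⟩
  set ev := evMap k a b d J hdV with hevdef
  have hinj : ∀ φ, ev φ = 0 → φ = 0 := by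
    intro φ hev
    apply vanish
    intro y hyI hyJ
    have hyV : y ∈ (bigV a b).1 :=
      ⟨hyI.1, lt_of_le_of_lt (le_trans (hJd' y hyJ) hdb) (lt_add_one b)⟩
    refine ⟨bigV a b, hyV, bigV_mem a b, ?_⟩
    have h1 := g_const k a b J φ (bigV a b) (bigV_mem a b) hpre ⟨y, ⟨hyV, hyJ⟩⟩ ⟨d, hdV⟩
    rw [h1]
    exact hev
  have hΦ : ev (canonHom k a b J hJb hcl) = 1 := by
    show (if h : d ∈ Ioc' a b then (1 : k) else 0) = 1
    exact dif_pos (⟨had, hdb⟩ : d ∈ Ioc' a b)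
  have hbij : Function.Bijective ev := by
    constructor
    · intro φ ψ h
      have h2 := hinj (φ - ψ) (by rw [map_sub, h, sub_self])
      exact sub_eq_zero.mp h2
    · intro x
      refine ⟨x • canonHom k a b J hJb hcl, ?_⟩
      rw [map_smul, hΦ, smul_eq_mul, mul_one]
  rw [(LinearEquiv.ofBijective ev hbij).rank_eq]
  exact Module.rank_self k
end
section
open CategoryTheory TopologicalSpace Set Topology Opposite

/-- For `a ∈ ℝ ∪ {−∞}` and `b ∈ ℝ` with `a < b`:
(i) for `c ∈ ℝ ∪ {−∞}` and `d ∈ ℝ` with `c < d`, the space `Hom(k_{(a,b]}, k_{(c,d]})` is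
one-dimensional over `k` if `c ≤ a < d ≤ b`, and is zero otherwise;
(ii) for real numbers `c ≤ d`, the space `Hom(k_{(a,b]}, k_{[c,d]})` is one-dimensional over `k`
if `a < d ≤ b`, and is zero otherwise. -/
theorem hom_ioc (k : Type) [Field k] (a : EReal) (b : ℝ) (hab : a < (b : EReal)) :
    (∀ (c : EReal) (d : ℝ), c < (d : EReal) →
      ((c ≤ a ∧ a < (d : EReal) ∧ d ≤ b) →
        Module.rank k (intervalSheaf k (Ioc' a b) ⟶ intervalSheaf k (Ioc' c d)) = 1) ∧
      (¬ (c ≤ a ∧ a < (d : EReal) ∧ d ≤ b) →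
        ∀ f : intervalSheaf k (Ioc' a b) ⟶ intervalSheaf k (Ioc' c d), f = 0)) ∧
    (∀ (c d : ℝ), c ≤ d →
      ((a < (d : EReal) ∧ d ≤ b) →
        Module.rank k (intervalSheaf k (Ioc' a b) ⟶ intervalSheaf k (Set.Icc c d)) = 1) ∧
      (¬ (a < (d : EReal) ∧ d ≤ b) →
        ∀ f : intervalSheaf k (Ioc' a b) ⟶ intervalSheaf k (Set.Icc c d), f = 0)) := by
  constructor
  · intro c d hcd
    constructor
    · rintro ⟨hca, had, hdb⟩
      apply rank_one k a b (Ioc' c d) d had hdb ⟨hcd, le_refl d⟩ (fun z hz => hz.2)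
      · intro x hx hxI
        refine ⟨lt_of_le_of_lt hca hxI.1, ?_⟩
        have hsub : Ioc' a b ∩ Ioc' c d ⊆ Iic d := fun z hz => hz.2.2
        have h1 := closure_mono hsub hx
        rwa [closure_Iic] at h1
      · have heq : ({x : ℝ | a < (x : EReal)} ∩ Iio (b + 1) ∩ Ioc' c d)
            = {x : ℝ | a < (x : EReal) ∧ x ≤ d} := by
          ext x
          constructor
          · rintro ⟨⟨h1, _⟩, h3⟩
            exact ⟨h1, h3.2⟩
          · rintro ⟨h1, h2⟩
            exact ⟨⟨h1, lt_of_le_of_lt (le_trans h2 hdb) (lt_add_one b)⟩, lt_of_le_of_lt hca h1, h2⟩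
        rw [heq]
        apply isPreconnected_iff_ordConnected.mpr
        exact ⟨fun x hx y hy z hz =>
          ⟨lt_of_lt_of_le hx.1 (EReal.coe_le_coe_iff.mpr hz.1), le_trans hz.2 hy.2⟩⟩
    · intro hfail φ
      refine vanish k a b _ φ fun y hyI hyJ => ?_
      by_cases hdb : d ≤ b
      · have had : a < (d : EReal) :=
          lt_of_lt_of_le hyI.1 (EReal.coe_le_coe_iff.mpr hyJ.2)
        have hac : a < c := by
          by_contra h
          exact hfail ⟨not_lt.mp h, had, hdb⟩
        exact zero_case_left k a b c d hcd hac hdb φ y hyI hyJ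
      · refine zero_case_right k a b (Ioc' c d) φ
          ⟨d, not_le.mp hdb, fun z hbz hzd =>
            ⟨lt_of_le_of_lt (le_trans (le_of_lt hyJ.1) (EReal.coe_le_coe_iff.mpr hyI.2))
              (EReal.coe_lt_coe_iff.mpr hbz), hzd⟩⟩
          (fun u v => ordConnected_Ioo.inter
            ⟨fun x hx w hw z hz =>
              ⟨lt_of_lt_of_le hx.1 (EReal.coe_le_coe_iff.mpr hz.1), le_trans hz.2 hw.2⟩⟩)
          y hyI hyJ
  · intro c d hcd
    constructor
    · rintro ⟨had, hdb⟩
      apply rank_one k a b (Icc c d) d had hdb ⟨hcd, le_refl d⟩ (fun z hz => hz.2)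
      · intro x hx _
        have h1 := closure_mono inter_subset_right hx
        rwa [isClosed_Icc.closure_eq] at h1
      · apply isPreconnected_iff_ordConnected.mpr
        exact (OrdConnected.inter
          (⟨fun x hx y hy z hz =>
            ⟨lt_of_lt_of_le hx.1 (EReal.coe_le_coe_iff.mpr hz.1), lt_of_le_of_lt hz.2 hy.2⟩⟩ :
            OrdConnected ({x : ℝ | a < (x : EReal)} ∩ Iio (b + 1)))
          ordConnected_Icc)
    · intro hfail φ
      refine vanish k a b _ φ fun y hyI hyJ => ?_
      have hbd : b < d := by
        by_contra h
        exact hfail ⟨lt_of_lt_of_le hyI.1 (EReal.coe_le_coe_iff.mpr hyJ.2), not_lt.mp h⟩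
      exact zero_case_right k a b (Icc c d) φ
        ⟨d, hbd, fun z hbz hzd => ⟨le_trans (le_trans hyJ.1 hyI.2) (le_of_lt hbz), hzd⟩⟩
        (fun u v => ordConnected_Ioo.inter ordConnected_Icc) y hyI hyJ
end

end
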